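/- arXiv:1604.06869 — 4 statements merged into one kernel-verified Lean document; each statement's English description precedes it below -/
import Mathlib

section
/- For every constant c ∈ ℂ, the entire function τ(x) = [⟨x,x⟩/(2δ) + c] (x ∈ V) is an ORG τ-function on V; that is, for every C_3-frame {±a,±b,±c'} relative to P and every x ∈ V, [⟨b+c',x⟩][⟨b−c',x⟩]τ(x+aδ)τ(x−aδ) + [⟨c'+a,x⟩][⟨c'−a,x⟩]τ(x+bδ)τ(x−bδ) + [⟨a+b,x⟩][⟨a−b,x⟩]τ(x+c'δ)τ(x−c'δ) = 0. -/
noncomputable section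

/-- `V = ℂ^8`. -/
abbrev V8 : Type := Fin 8 → ℂ

/-- The symmetric bilinear form `⟨x,y⟩ = ∑ᵢ xᵢ yᵢ` on `V`. -/
def ip (x y : V8) : ℂ := ∑ i, x i * y i

/-- `φ = (1/2, …, 1/2)`. -/
def phi8 : V8 := fun _ => (1 : ℂ) / 2

/-- `x` has all coordinates in `ℤ`. -/
def IsIntVec (x : V8) : Prop := ∀ i, ∃ n : ℤ, x i = (n : ℂ)

/-- The `E₈` root lattice `P = {a ∈ ℤ⁸ ∪ (φ + ℤ⁸) : ⟨φ,a⟩ ∈ ℤ}`. -/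
def E8lat : Set V8 :=
  {a | (IsIntVec a ∨ IsIntVec (a - phi8)) ∧ ∃ n : ℤ, ip phi8 a = (n : ℂ)}

/-- A `C_l`-frame relative to `P`: a set `A = {±a₀, …, ±a_{l-1}}` with
`⟨aᵢ,aⱼ⟩ = δᵢⱼ`, `aᵢ ± aⱼ ∈ P` for `i < j`, and `2aᵢ ∈ P`. -/
def IsClFrame (l : ℕ) (A : Set V8) : Prop :=
  ∃ a : Fin l → V8,
    A = Set.range a ∪ Set.range (fun i => -a i) ∧
    (∀ i j, ip (a i) (a j) = if i = j then 1 else 0) ∧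
    (∀ i j, i < j → a i + a j ∈ E8lat ∧ a i - a j ∈ E8lat) ∧
    (∀ i, (2 : ℂ) • a i ∈ E8lat)

/-- The three-term relation `[β±γ][z±α] + [γ±α][z±β] + [α±β][z±γ] = 0`. -/
def ThreeTermRel (br : ℂ → ℂ) : Prop :=
  ∀ z α β γ : ℂ,
    br (β + γ) * br (β - γ) * (br (z + α) * br (z - α)) +
      br (γ + α) * br (γ - α) * (br (z + β) * br (z - β)) +
      br (α + β) * br (α - β) * (br (z + γ) * br (z - γ)) = 0

/-- `(a,b,c)` is a triple such that `{±a, ±b, ±c}` is a `C₃`-frame relative to `P`. -/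
def IsC3Triple (a b c : V8) : Prop :=
  ip a a = 1 ∧ ip b b = 1 ∧ ip c c = 1 ∧
  ip a b = 0 ∧ ip a c = 0 ∧ ip b c = 0 ∧
  a + b ∈ E8lat ∧ a - b ∈ E8lat ∧ a + c ∈ E8lat ∧ a - c ∈ E8lat ∧
  b + c ∈ E8lat ∧ b - c ∈ E8lat ∧
  (2 : ℂ) • a ∈ E8lat ∧ (2 : ℂ) • b ∈ E8lat ∧ (2 : ℂ) • c ∈ E8lat

/-- The non-autonomous Hirota equation `H(a,b,c)` at the point `x`. -/
def HirotaEq (br : ℂ → ℂ) (δ : ℂ) (τ : V8 → ℂ) (a b c x : V8) : Prop :=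
  br (ip (b + c) x) * br (ip (b - c) x) * (τ (x + δ • a) * τ (x - δ • a)) +
    br (ip (c + a) x) * br (ip (c - a) x) * (τ (x + δ • b) * τ (x - δ • b)) +
    br (ip (a + b) x) * br (ip (a - b) x) * (τ (x + δ • c) * τ (x - δ • c)) = 0

/-- `τ` is an ORG τ-function on `D`: the Hirota equation holds for every
`C₃`-frame `{±a,±b,±c}` and every `x` whose six shifts lie in `D`. -/
def IsORGTau (br : ℂ → ℂ) (δ : ℂ) (D : Set V8) (τ : V8 → ℂ) : Prop :=
  ∀ a b c : V8, IsC3Triple a b c → ∀ x : V8,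
    x + δ • a ∈ D → x - δ • a ∈ D → x + δ • b ∈ D → x - δ • b ∈ D →
    x + δ • c ∈ D → x - δ • c ∈ D → HirotaEq br δ τ a b c x

/-- `D + Pδ = D`. -/
def PShiftInvariant (δ : ℂ) (D : Set V8) : Prop :=
  ∀ v ∈ E8lat, ∀ x ∈ D, x + δ • v ∈ D

/-- `e(z) = exp(2π√−1 z)`. -/
def eFun (z : ℂ) : ℂ := Complex.exp (2 * (Real.pi : ℂ) * Complex.I * z)


lemma ip_add_left (a b x : V8) : ip (a + b) x = ip a x + ip b x := by
  simp [ip, add_mul, Finset.sum_add_distrib]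

lemma ip_sub_left (a b x : V8) : ip (a - b) x = ip a x - ip b x := by
  simp [ip, sub_mul, Finset.sum_sub_distrib]

lemma ip_comm (x y : V8) : ip x y = ip y x := by
  simp [ip, mul_comm]

lemma ip_smul_left (t : ℂ) (a x : V8) : ip (t • a) x = t * ip a x := by
  simp [ip, Finset.mul_sum, mul_assoc]

lemma ip_shift (x a : V8) (δ : ℂ) :
    ip (x + δ • a) (x + δ • a) = ip x x + 2 * δ * ip a x + δ ^ 2 * ip a a := by
  simp only [ip, Pi.add_apply, Pi.smul_apply, smul_eq_mul, Finset.mul_sum]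
  rw [← Finset.sum_add_distrib, ← Finset.sum_add_distrib]
  apply Finset.sum_congr rfl
  intro i _
  ring

set_option maxHeartbeats 1600000 in
/-- Proposition 2.3: the canonical solution `τ(x) = [⟨x,x⟩/(2δ) + c]` is an
ORG τ-function on all of `V`. -/
theorem statement2 (br : ℂ → ℂ) (hbr_ne : br ≠ 0) (hbr_ent : Differentiable ℂ br)
    (hbr3 : ThreeTermRel br) (δ : ℂ) (hδ : δ ≠ 0) (c : ℂ) :
    IsORGTau br δ Set.univ (fun x => br (ip x x / (2 * δ) + c)) := by
  intro a b c' htrip x _ _ _ _ _ _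
  obtain ⟨ha, hb, hc, -, -, -, -⟩ := htrip
  unfold HirotaEq
  have key : ∀ v : V8, ip v v = 1 →
      ip (x + δ • v) (x + δ • v) / (2 * δ) + c
        = (ip x x / (2 * δ) + c + δ / 2) + ip v x := by
    intro v hv
    rw [ip_shift, hv]
    field_simp
    ring
  have key' : ∀ v : V8, ip v v = 1 →
      ip (x - δ • v) (x - δ • v) / (2 * δ) + c
        = (ip x x / (2 * δ) + c + δ / 2) - ip v x := by
    intro v hv
    have : x - δ • v = x + δ • (-v) := by
      rw [smul_neg]; abel
    rw [this, ip_shift]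
    have hv' : ip (-v) (-v) = 1 := by
      have : ip (-v) (-v) = ip v v := by simp [ip]
      rw [this, hv]
    rw [hv']
    have : ip (-v) x = - ip v x := by simp [ip]
    rw [this]
    field_simp
    ring
  simp only [key a ha, key b hb, key c' hc, key' a ha, key' b hb, key' c' hc]
  simp only [ip_add_left, ip_sub_left]
  exact hbr3 (ip x x / (2 * δ) + c + δ / 2) (ip a x) (ip b x) (ip c' x)
end
end

section
/- If [·] : ℂ → ℂ is a nonzero entire function satisfying the three-term relation, then [·] is an odd function: [0] = 0 and [−z] = −[z] for all z ∈ ℂ. -/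
noncomputable section

/-- Entire functions form an integral domain: if a pointwise product of two
entire functions vanishes identically, one of them vanishes identically. -/
lemma entire_mul_eq_zero {f g : ℂ → ℂ} (hf : Differentiable ℂ f) (hg : Differentiable ℂ g)
    (h : ∀ z, f z * g z = 0) : (∀ z, f z = 0) ∨ (∀ z, g z = 0) := by
  by_cases hf0 : ∀ z, f z = 0
  · exact Or.inl hf0
  · push_neg at hf0
    obtain ⟨a, ha⟩ := hf0
    right
    have hev : ∀ᶠ z in nhds a, f z ≠ 0 := hf.continuous.continuousAt.eventually_ne ha
    have hg0 : g =ᶠ[nhds a] 0 := by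
      filter_upwards [hev] with z hz
      rcases mul_eq_zero.mp (h z) with h1 | h1
      · exact absurd h1 hz
      · exact h1
    intro z
    have hA : AnalyticOnNhd ℂ g Set.univ := by
      intro x _
      exact hg.analyticAt x
    have := hA.eqOn_zero_of_preconnected_of_eventuallyEq_zero
      isPreconnected_univ (Set.mem_univ a) hg0 (Set.mem_univ z)
    simpa using this

/-- A nonzero entire function satisfying the three-term relation is odd. -/
theorem statement8 (br : ℂ → ℂ) (hbr_ne : br ≠ 0) (hbr_ent : Differentiable ℂ br)
    (hbr3 : ThreeTermRel br) :
    br 0 = 0 ∧ ∀ z : ℂ, br (-z) = -br z := by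
  have br0 : br 0 = 0 := by
    by_contra h0
    apply hbr_ne
    funext w
    have h := hbr3 (w / 2) (w / 2) (w / 2) (w / 2)
    rw [show w / 2 + w / 2 = w from by ring, show w / 2 - w / 2 = (0 : ℂ) from by ring] at h
    have : br 0 * br w = 0 := by
      have h3 : (3 : ℂ) * (br w * br 0 * (br w * br 0)) = 0 := by linear_combination h
      have := mul_eq_zero.mp h3
      rcases this with h4 | h4
      · norm_num at h4
      · rcases mul_eq_zero.mp h4 with h5 | h5 <;>
        · rcases mul_eq_zero.mp h5 with h6 | h6
          · rw [h6]; ring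
          · rw [h6]; ring
    rcases mul_eq_zero.mp this with h7 | h7
    · exact absurd h7 h0
    · exact h7
  have hodd : ∀ u : ℂ, br (-u) + br u = 0 := by
    intro u
    by_contra hu
    have key : ∀ z : ℂ, (br z * br z) * br (2 * z - u) = 0 := by
      intro z
      have h := hbr3 z z 0 (z - u)
      rw [show z + z = 2 * z from by ring, show z - z = (0 : ℂ) from by ring,
        show (0 : ℂ) + (z - u) = z - u from by ring,
        show (0 : ℂ) - (z - u) = u - z from by ring,
        show z - u + z = 2 * z - u from by ring,
        show z - u - z = -u from by ring,
        show z + 0 = z from by ring, show z - 0 = z from by ring,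
        show z + (z - u) = 2 * z - u from by ring,
        show z - (z - u) = u from by ring, br0] at h
      have h2 : (br z * br z * br (2 * z - u)) * (br (-u) + br u) = 0 := by
        linear_combination h
      rcases mul_eq_zero.mp h2 with h3 | h3
      · exact h3
      · exact absurd h3 hu
    have hdf : Differentiable ℂ (fun z : ℂ => br z * br z) := hbr_ent.mul hbr_ent
    have hdg : Differentiable ℂ (fun z : ℂ => br (2 * z - u)) := by
      apply hbr_ent.comp
      exact (differentiable_id.const_mul 2).sub_const u
    rcases entire_mul_eq_zero hdf hdg key with hL | hR
    · apply hbr_ne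
      funext w
      rcases mul_eq_zero.mp (hL w) with h | h <;> exact h
    · apply hbr_ne
      funext w
      have := hR ((w + u) / 2)
      rwa [show 2 * ((w + u) / 2) - u = w from by ring] at this
  refine ⟨br0, fun z => ?_⟩
  linear_combination hodd z
end
end

section
/- Let ψ : ℂ^8 → ℂ be an arbitrary function, let a_0, a_1, a_2 ∈ ℂ^8 and δ ∈ ℂ. For each integer n ≥ 1 define K^{(n)}(x) = det( ψ( x − (n−1)a_0δ + (n+1−i−j)a_1δ + (j−i)a_2δ ) )_{i,j=1,...,n}, and set K^{(0)}(x) = 1 for all x. Then for every n ≥ 1 and every x ∈ ℂ^8: K^{(n−1)}(x − a_0δ)·K^{(n+1)}(x + a_0δ) = K^{(n)}(x + a_1δ)·K^{(n)}(x − a_1δ) − K^{(n)}(x + a_2δ)·K^{(n)}(x − a_2δ). (This is the 2-directional Casorati determinant solution of the Toda-type recursion underlying Theorem 4.2, a consequence of the Desnanot–Jacobi/Lewis Carroll determinant identity.) -/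
noncomputable section

/-- The 2-directional Casorati determinant
`K⁽ⁿ⁾(x) = det(ψ(x − (n−1)a₀δ + (n+1−i−j)a₁δ + (j−i)a₂δ))_{i,j=1,…,n}`,
with `K⁽⁰⁾(x) = 1` (determinant of the empty matrix). -/
def Kdet (ψ : V8 → ℂ) (a0 a1 a2 : V8) (δ : ℂ) (n : ℕ) (x : V8) : ℂ :=
  Matrix.det (Matrix.of fun i j : Fin n =>
    ψ (x - (((n : ℂ) - 1) * δ) • a0 +
        (((n : ℂ) - 1 - (i.val : ℂ) - (j.val : ℂ)) * δ) • a1 +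
        (((j.val : ℂ) - (i.val : ℂ)) * δ) • a2))

set_option linter.unusedSectionVars false


open Matrix

variable {R : Type*} [CommRing R]

/-- Expanding a determinant along a row given as a finite sum. -/
lemma det_updateRow_finsum {N : ℕ} (M : Matrix (Fin N) (Fin N) R) (p : Fin N)
    {ι : Type*} (s : Finset ι) (w : ι → Fin N → R) :
    (M.updateRow p (∑ i ∈ s, w i)).det = ∑ i ∈ s, (M.updateRow p (w i)).det := by
  classical
  induction s using Finset.induction with
  | empty =>
      simp only [Finset.sum_empty]
      exact Matrix.det_eq_zero_of_row_eq_zero p (by simp)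
  | insert _ _ h ih =>
      rw [Finset.sum_insert h, Matrix.det_updateRow_add, ih, Finset.sum_insert h]

lemma updateRow_comm {N : ℕ} (M : Matrix (Fin N) (Fin N) R) {p q : Fin N} (h : p ≠ q)
    (u v : Fin N → R) :
    (M.updateRow p u).updateRow q v = (M.updateRow q v).updateRow p u := by
  ext i j
  rcases eq_or_ne i p with rfl | hip
  · simp [Matrix.updateRow_apply, h]
  · rcases eq_or_ne i q with rfl | hiq
    · simp [Matrix.updateRow_apply, h.symm]
    · simp [Matrix.updateRow_apply, hip, hiq]

lemma detRow0 {m : ℕ} (A : Matrix (Fin (m+1)) (Fin (m+1)) R) :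
    (A.updateRow 0 (Pi.single 0 1)).det = (A.submatrix Fin.succ Fin.succ).det := by
  rw [Matrix.det_succ_row_zero, Finset.sum_eq_single 0]
  · have hsub : (A.updateRow 0 (Pi.single 0 1)).submatrix Fin.succ ((0 : Fin (m+1)).succAbove)
        = A.submatrix Fin.succ Fin.succ := by
      ext i j
      simp [Matrix.updateRow_ne (Fin.succ_ne_zero i)]
    rw [hsub]
    simp
  · intro j _ hj
    simp [Matrix.updateRow_self, Pi.single_apply, hj]
  · simp

lemma neg_one_pow_self_mul {m : ℕ} : ((-1 : R) ^ m) * (-1 : R) ^ m = 1 := by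
  rw [← pow_add, ← two_mul, pow_mul, neg_one_sq, one_pow]

lemma detRowLast {m : ℕ} (A : Matrix (Fin (m+1)) (Fin (m+1)) R) :
    (A.updateRow (Fin.last m) (Pi.single (Fin.last m) 1)).det
      = (A.submatrix Fin.castSucc Fin.castSucc).det := by
  rw [Matrix.det_succ_row _ (Fin.last m), Finset.sum_eq_single (Fin.last m)]
  · have hsub : (A.updateRow (Fin.last m) (Pi.single (Fin.last m) 1)).submatrix
        ((Fin.last m).succAbove) ((Fin.last m).succAbove)
        = A.submatrix Fin.castSucc Fin.castSucc := by
      ext i j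
      simp [Fin.succAbove_last, Matrix.updateRow_ne (Fin.castSucc_lt_last i).ne]
    rw [hsub]
    simp [neg_one_pow_self_mul]
  · intro j _ hj
    simp [Matrix.updateRow_self, Pi.single_apply, hj]
  · simp

lemma detRow0Last {m : ℕ} (A : Matrix (Fin (m+1)) (Fin (m+1)) R) :
    (A.updateRow 0 (Pi.single (Fin.last m) 1)).det
      = (-1 : R) ^ m * (A.submatrix Fin.succ Fin.castSucc).det := by
  rw [Matrix.det_succ_row_zero, Finset.sum_eq_single (Fin.last m)]
  · have hsub : (A.updateRow 0 (Pi.single (Fin.last m) 1)).submatrix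
        Fin.succ ((Fin.last m).succAbove) = A.submatrix Fin.succ Fin.castSucc := by
      ext i j
      simp [Fin.succAbove_last, Matrix.updateRow_ne (Fin.succ_ne_zero i)]
    rw [hsub]
    simp
  · intro j _ hj
    simp [Matrix.updateRow_self, Pi.single_apply, hj]
  · simp

lemma detRowLast0 {m : ℕ} (A : Matrix (Fin (m+1)) (Fin (m+1)) R) :
    (A.updateRow (Fin.last m) (Pi.single 0 1)).det
      = (-1 : R) ^ m * (A.submatrix Fin.castSucc Fin.succ).det := by
  rw [Matrix.det_succ_row _ (Fin.last m), Finset.sum_eq_single 0]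
  · have hsub : (A.updateRow (Fin.last m) (Pi.single 0 1)).submatrix
        ((Fin.last m).succAbove) ((0 : Fin (m+1)).succAbove)
        = A.submatrix Fin.castSucc Fin.succ := by
      ext i j
      simp [Fin.succAbove_last, Matrix.updateRow_ne (Fin.castSucc_lt_last i).ne]
    rw [hsub]
    simp
  · intro j _ hj
    simp [Matrix.updateRow_self, Pi.single_apply, hj]
  · simp

lemma one_row {N : ℕ} (i : Fin N) : (1 : Matrix (Fin N) (Fin N) R) i = Pi.single i 1 := by
  funext j
  simp [Matrix.one_apply, Pi.single_apply, eq_comm]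

lemma key_det {m : ℕ} (i j : Fin (m+2)) :
    (((1 : Matrix (Fin (m+2)) (Fin (m+2)) R).updateRow 0 (Pi.single i 1)).updateRow
        (Fin.last (m+1)) (Pi.single j 1)).det
      = if i = 0 ∧ j = Fin.last (m+1) then 1
        else if i = Fin.last (m+1) ∧ j = 0 then -1 else 0 := by
  have hne : (0 : Fin (m+2)) ≠ Fin.last (m+1) := by simp [Fin.ext_iff]
  set M := ((1 : Matrix (Fin (m+2)) (Fin (m+2)) R).updateRow 0 (Pi.single i 1)).updateRow
      (Fin.last (m+1)) (Pi.single j 1) with hM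
  have hrow0 : M 0 = Pi.single i 1 := by
    rw [hM, Matrix.updateRow_ne hne, Matrix.updateRow_self]
  have hrowlast : M (Fin.last (m+1)) = Pi.single j 1 := Matrix.updateRow_self
  have hrowmid : ∀ k : Fin (m+2), k ≠ 0 → k ≠ Fin.last (m+1) → M k = Pi.single k 1 := by
    intro k h0 hl
    rw [hM, Matrix.updateRow_ne hl, Matrix.updateRow_ne h0, one_row]
  rcases eq_or_ne i 0 with rfl | hi0
  · rcases eq_or_ne j (Fin.last (m+1)) with rfl | hjl
    · have : M = 1 := by
        ext p q
        rcases eq_or_ne p 0 with rfl | hp0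
        · rw [hrow0, ← one_row]
        · rcases eq_or_ne p (Fin.last (m+1)) with rfl | hpl
          · rw [hrowlast, ← one_row]
          · rw [hrowmid p hp0 hpl, ← one_row]
      simp [this, hne]
    · -- j ≠ last; row last = single j 1.  If j = 0 then rows 0 and last agree,
      -- otherwise rows j and last agree.
      rcases eq_or_ne j 0 with rfl | hj0
      · rw [if_neg (by simp [hne, hjl]), if_neg (by simp [hne.symm])]
        exact Matrix.det_zero_of_row_eq hne (by rw [hrow0, hrowlast])
      · rw [if_neg (by simp [hjl]), if_neg (by simp [hj0])]
        exact Matrix.det_zero_of_row_eq (i := j) (j := Fin.last (m+1)) hjl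
          (by rw [hrowmid j hj0 hjl, hrowlast])
  · rcases eq_or_ne i (Fin.last (m+1)) with rfl | hil
    · rcases eq_or_ne j 0 with rfl | hj0
      · -- swap matrix
        have hMs : M = (Equiv.swap (0 : Fin (m+2)) (Fin.last (m+1))).permMatrix R := by
          ext p q
          rcases eq_or_ne p 0 with rfl | hp0
          · rw [hrow0]
            simp [Equiv.Perm.permMatrix, PEquiv.toMatrix_apply, Equiv.toPEquiv_apply,
              Equiv.swap_apply_left, Pi.single_apply, eq_comm]
          · rcases eq_or_ne p (Fin.last (m+1)) with rfl | hpl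
            · rw [hrowlast]
              simp [Equiv.Perm.permMatrix, PEquiv.toMatrix_apply, Equiv.toPEquiv_apply,
                Equiv.swap_apply_right, Pi.single_apply, eq_comm]
            · rw [hrowmid p hp0 hpl]
              simp [Equiv.Perm.permMatrix, PEquiv.toMatrix_apply, Equiv.toPEquiv_apply,
                Equiv.swap_apply_of_ne_of_ne hp0 hpl, Pi.single_apply, eq_comm]
        rw [hMs, Matrix.det_permutation, Equiv.Perm.sign_swap hne]
        simp [hne.symm, hne]
      · rw [if_neg (by simp [hne.symm]), if_neg (by simp [hj0])]
        rcases eq_or_ne j (Fin.last (m+1)) with rfl | hjl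
        · exact Matrix.det_zero_of_row_eq hne (by rw [hrow0, hrowlast])
        · exact Matrix.det_zero_of_row_eq (i := j) (j := Fin.last (m+1)) hjl
            (by rw [hrowmid j hj0 hjl, hrowlast])
    · rw [if_neg (by simp [hi0]), if_neg (by simp [hil])]
      exact Matrix.det_zero_of_row_eq (i := 0) (j := i) (Ne.symm hi0)
        (by rw [hrow0, hrowmid i hi0 hil])

lemma detB {m : ℕ} (u v : Fin (m+2) → R) :
    (((1 : Matrix (Fin (m+2)) (Fin (m+2)) R).updateRow 0 u).updateRow
        (Fin.last (m+1)) v).det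
      = u 0 * v (Fin.last (m+1)) - u (Fin.last (m+1)) * v 0 := by
  have hne : (0 : Fin (m+2)) ≠ Fin.last (m+1) := by simp [Fin.ext_iff]
  have hsingle : ∀ (w : Fin (m+2) → R) (k : Fin (m+2)),
      Pi.single k (w k) = w k • (Pi.single k 1 : Fin (m+2) → R) := by
    intro w k; funext l
    simp [Pi.single_apply, mul_ite]
  calc (((1 : Matrix (Fin (m+2)) (Fin (m+2)) R).updateRow 0 u).updateRow
        (Fin.last (m+1)) v).det
      = ∑ j : Fin (m+2), (((1 : Matrix (Fin (m+2)) (Fin (m+2)) R).updateRow 0 u).updateRow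
          (Fin.last (m+1)) (Pi.single j (v j))).det := by
        rw [← det_updateRow_finsum]
        simp [Finset.univ_sum_single]
    _ = ∑ j : Fin (m+2), v j * ∑ i : Fin (m+2), u i *
          (((1 : Matrix (Fin (m+2)) (Fin (m+2)) R).updateRow 0 (Pi.single i 1)).updateRow
            (Fin.last (m+1)) (Pi.single j 1)).det := by
        refine Finset.sum_congr rfl fun j _ => ?_
        rw [hsingle v j, Matrix.det_updateRow_smul]
        congr 1
        rw [updateRow_comm _ hne]
        calc ((((1 : Matrix (Fin (m+2)) (Fin (m+2)) R).updateRow (Fin.last (m+1))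
              (Pi.single j 1)).updateRow 0 u)).det
            = ∑ i : Fin (m+2), ((((1 : Matrix (Fin (m+2)) (Fin (m+2)) R).updateRow
                (Fin.last (m+1)) (Pi.single j 1)).updateRow 0 (Pi.single i (u i)))).det := by
              rw [← det_updateRow_finsum]
              simp [Finset.univ_sum_single]
          _ = ∑ i : Fin (m+2), u i *
                (((1 : Matrix (Fin (m+2)) (Fin (m+2)) R).updateRow 0 (Pi.single i 1)).updateRow
                  (Fin.last (m+1)) (Pi.single j 1)).det := by
              refine Finset.sum_congr rfl fun i _ => ?_
              rw [hsingle u i, Matrix.det_updateRow_smul, updateRow_comm _ hne.symm]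
    _ = u 0 * v (Fin.last (m+1)) - u (Fin.last (m+1)) * v 0 := by
        simp only [key_det]
        rw [Finset.sum_eq_add_of_mem (Fin.last (m+1)) 0 (Finset.mem_univ _) (Finset.mem_univ _)
          hne.symm ?_]
        · rw [Finset.sum_eq_single 0, Finset.sum_eq_single (Fin.last (m+1))]
          · simp [hne, hne.symm]; ring
          · intro i _ hi
            simp [hne, hne.symm, hi]
          · simp
          · intro i _ hi
            simp [hne, hne.symm, hi]
          · simp
        · intro c _ hc
          obtain ⟨hcl, hc0⟩ := hc
          rw [Finset.sum_eq_zero, mul_zero]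
          intro i _
          simp [hc0, hcl, Ne.symm hcl, Ne.symm hc0]

lemma dj_aux {m : ℕ} (A : Matrix (Fin (m+2)) (Fin (m+2)) R) :
    A.det * ((A.submatrix Fin.succ Fin.succ).det * (A.submatrix Fin.castSucc Fin.castSucc).det
        - (A.submatrix Fin.castSucc Fin.succ).det * (A.submatrix Fin.succ Fin.castSucc).det)
      = A.det * (A.det *
          (A.submatrix (fun i : Fin m => i.succ.castSucc) (fun i : Fin m => i.succ.castSucc)).det) := by
  have hne : (0 : Fin (m+2)) ≠ Fin.last (m+1) := by simp [Fin.ext_iff]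
  set B : Matrix (Fin (m+2)) (Fin (m+2)) R :=
    ((1 : Matrix (Fin (m+2)) (Fin (m+2)) R).updateRow 0 (A.adjugate 0)).updateRow
      (Fin.last (m+1)) (A.adjugate (Fin.last (m+1))) with hB
  -- B * A is A with first and last rows replaced by det A · e₀ and det A · e_last
  have hBA : B * A = (A.updateRow 0 (Pi.single 0 A.det)).updateRow (Fin.last (m+1))
      (Pi.single (Fin.last (m+1)) A.det) := by
    ext i j
    rw [Matrix.mul_apply]
    rcases eq_or_ne i 0 with rfl | hi0
    · have hrow : B 0 = A.adjugate 0 := by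
        rw [hB, Matrix.updateRow_ne hne, Matrix.updateRow_self]
      have : ∑ k, B 0 k * A k j = (A.adjugate * A) 0 j := by
        rw [Matrix.mul_apply, hrow]
      rw [this, Matrix.adjugate_mul]
      simp [Matrix.updateRow_ne hne, Matrix.one_apply, Pi.single_apply, eq_comm]
    · rcases eq_or_ne i (Fin.last (m+1)) with rfl | hil
      · have hrow : B (Fin.last (m+1)) = A.adjugate (Fin.last (m+1)) := Matrix.updateRow_self
        have : ∑ k, B (Fin.last (m+1)) k * A k j = (A.adjugate * A) (Fin.last (m+1)) j := by
          rw [Matrix.mul_apply, hrow]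
        rw [this, Matrix.adjugate_mul]
        simp [Matrix.one_apply, Pi.single_apply, eq_comm]
      · have hrow : B i = (1 : Matrix (Fin (m+2)) (Fin (m+2)) R) i := by
          rw [hB, Matrix.updateRow_ne hil, Matrix.updateRow_ne hi0]
        have : ∑ k, B i k * A k j = ((1 : Matrix (Fin (m+2)) (Fin (m+2)) R) * A) i j := by
          rw [Matrix.mul_apply, hrow]
        rw [this, Matrix.one_mul, Matrix.updateRow_ne hil, Matrix.updateRow_ne hi0]
  -- determinant of the right-hand side
  have hsingle : ∀ (p : Fin (m+2)),
      (Pi.single p A.det : Fin (m+2) → R) = A.det • (Pi.single p 1 : Fin (m+2) → R) := by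
    intro p; funext l
    simp [Pi.single_apply, mul_ite]
  have hC : ((A.updateRow 0 (Pi.single 0 A.det)).updateRow (Fin.last (m+1))
      (Pi.single (Fin.last (m+1)) A.det)).det
      = A.det * (A.det *
        (A.submatrix (fun i : Fin m => i.succ.castSucc) (fun i : Fin m => i.succ.castSucc)).det) := by
    rw [hsingle, hsingle, Matrix.det_updateRow_smul, updateRow_comm _ hne,
      Matrix.det_updateRow_smul, updateRow_comm _ hne.symm]
    congr 2
    -- det ((A.updateRow 0 e₀).updateRow last e_last) = det of the inner submatrix
    rw [updateRow_comm _ hne, detRow0]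
    have hsub : ((A.updateRow (Fin.last (m+1)) (Pi.single (Fin.last (m+1)) 1)).submatrix
        Fin.succ Fin.succ)
        = (A.submatrix Fin.succ Fin.succ).updateRow (Fin.last m) (Pi.single (Fin.last m) 1) := by
      ext i j
      rcases eq_or_ne i (Fin.last m) with rfl | hi
      · rw [Matrix.submatrix_apply, Fin.succ_last, Matrix.updateRow_self,
          Matrix.updateRow_self]
        simp [Pi.single_apply, ← Fin.succ_last, Fin.succ_inj]
      · rw [Matrix.submatrix_apply, Matrix.updateRow_ne, Matrix.updateRow_ne hi,
          Matrix.submatrix_apply]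
        rw [← Fin.succ_last]
        exact fun h => hi (Fin.succ_inj.mp h)
    rw [hsub, detRowLast, Matrix.submatrix_submatrix]
    congr 1
  -- determinant of B
  have hdetB : B.det = (A.submatrix Fin.succ Fin.succ).det *
        (A.submatrix Fin.castSucc Fin.castSucc).det
      - (A.submatrix Fin.castSucc Fin.succ).det * (A.submatrix Fin.succ Fin.castSucc).det := by
    rw [hB, detB]
    have h00 : A.adjugate 0 0 = (A.submatrix Fin.succ Fin.succ).det := by
      rw [Matrix.adjugate_apply, detRow0]
    have hll : A.adjugate (Fin.last (m+1)) (Fin.last (m+1))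
        = (A.submatrix Fin.castSucc Fin.castSucc).det := by
      rw [Matrix.adjugate_apply, detRowLast]
    have h0l : A.adjugate 0 (Fin.last (m+1))
        = (-1 : R) ^ (m+1) * (A.submatrix Fin.castSucc Fin.succ).det := by
      rw [Matrix.adjugate_apply, detRowLast0]
    have hl0 : A.adjugate (Fin.last (m+1)) 0
        = (-1 : R) ^ (m+1) * (A.submatrix Fin.succ Fin.castSucc).det := by
      rw [Matrix.adjugate_apply, detRow0Last]
    rw [h00, hll, h0l, hl0]
    have := neg_one_pow_self_mul (R := R) (m := m+1)
    ring_nf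
    ring_nf at this
    rw [this, mul_one]
  calc A.det * ((A.submatrix Fin.succ Fin.succ).det *
          (A.submatrix Fin.castSucc Fin.castSucc).det
        - (A.submatrix Fin.castSucc Fin.succ).det * (A.submatrix Fin.succ Fin.castSucc).det)
      = B.det * A.det := by rw [hdetB]; ring
    _ = (B * A).det := (Matrix.det_mul _ _).symm
    _ = _ := by rw [hBA, hC]

/-- Desnanot–Jacobi / Dodgson condensation identity over `ℂ`. -/
lemma desnanot_jacobi {m : ℕ} (A : Matrix (Fin (m+2)) (Fin (m+2)) ℂ) :
    (A.submatrix (fun i : Fin m => i.succ.castSucc) (fun i : Fin m => i.succ.castSucc)).det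
        * A.det
      = (A.submatrix Fin.castSucc Fin.castSucc).det * (A.submatrix Fin.succ Fin.succ).det
        - (A.submatrix Fin.castSucc Fin.succ).det * (A.submatrix Fin.succ Fin.castSucc).det := by
  classical
  -- first, the generic matrix over a polynomial ring, where the determinant is a
  -- nonzerodivisor
  set R₀ := MvPolynomial (Fin (m+2) × Fin (m+2)) ℤ
  set A₀ : Matrix (Fin (m+2)) (Fin (m+2)) R₀ := Matrix.mvPolynomialX (Fin (m+2)) (Fin (m+2)) ℤ
  have hgen : (A₀.submatrix (fun i : Fin m => i.succ.castSucc)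
        (fun i : Fin m => i.succ.castSucc)).det * A₀.det
      = (A₀.submatrix Fin.castSucc Fin.castSucc).det * (A₀.submatrix Fin.succ Fin.succ).det
        - (A₀.submatrix Fin.castSucc Fin.succ).det * (A₀.submatrix Fin.succ Fin.castSucc).det := by
    have h := dj_aux A₀
    have hd : A₀.det ≠ 0 :=
      show (Matrix.mvPolynomialX (Fin (m+2)) (Fin (m+2)) ℤ).det ≠ 0 from
        Matrix.det_mvPolynomialX_ne_zero (m := Fin (m+2)) (R := ℤ)
    have := mul_left_cancel₀ hd h
    linear_combination -this
  -- now evaluate at the entries of `A`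
  set φ : R₀ →+* ℂ := (MvPolynomial.eval₂Hom (Int.castRingHom ℂ)
    (fun p : (Fin (m+2)) × (Fin (m+2)) => A p.1 p.2))
  have hmap : A₀.map φ = A := by
    ext i j
    rw [Matrix.map_apply]
    show φ (MvPolynomial.X (i, j)) = A i j
    exact MvPolynomial.eval₂Hom_X' _ _ _
  have hdet : ∀ {k : ℕ} (r c : Fin k → Fin (m+2)),
      φ (A₀.submatrix r c).det = (A.submatrix r c).det := by
    intro k r c
    rw [← hmap, RingHom.map_det]
    rfl
  have hdet0 : φ A₀.det = A.det := by rw [← hmap, RingHom.map_det]; rfl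
  have := congrArg φ hgen
  simpa only [_root_.map_sub, _root_.map_mul, hdet, hdet0] using this

/-- The 2-directional Casorati determinants solve the Toda-type recursion
`K⁽ⁿ⁻¹⁾(x−a₀δ)·K⁽ⁿ⁺¹⁾(x+a₀δ) = K⁽ⁿ⁾(x±a₁δ) − K⁽ⁿ⁾(x±a₂δ)`
(a consequence of the Desnanot–Jacobi/Lewis Carroll identity). -/
theorem statement10 (ψ : V8 → ℂ) (a0 a1 a2 : V8) (δ : ℂ) (n : ℕ) (hn : 1 ≤ n) (x : V8) :
    Kdet ψ a0 a1 a2 δ (n - 1) (x - δ • a0) * Kdet ψ a0 a1 a2 δ (n + 1) (x + δ • a0) =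
      Kdet ψ a0 a1 a2 δ n (x + δ • a1) * Kdet ψ a0 a1 a2 δ n (x - δ • a1) -
        Kdet ψ a0 a1 a2 δ n (x + δ • a2) * Kdet ψ a0 a1 a2 δ n (x - δ • a2) := by
  obtain ⟨m, rfl⟩ : ∃ m, n = m + 1 := ⟨n - 1, (Nat.succ_pred_eq_of_pos hn).symm⟩
  set M : Matrix (Fin (m+2)) (Fin (m+2)) ℂ := Matrix.of (fun i j : Fin (m+2) =>
    ψ (x + δ • a0 - ((((m+1+1 : ℕ) : ℂ) - 1) * δ) • a0 +
        ((((m+1+1 : ℕ) : ℂ) - 1 - (i.val : ℂ) - (j.val : ℂ)) * δ) • a1 +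
        (((j.val : ℂ) - (i.val : ℂ)) * δ) • a2)) with hM
  have ebig : Kdet ψ a0 a1 a2 δ (m+1+1) (x + δ • a0) = M.det := rfl
  have e0 : Kdet ψ a0 a1 a2 δ m (x - δ • a0)
      = (M.submatrix (fun i : Fin m => i.succ.castSucc) (fun i : Fin m => i.succ.castSucc)).det := by
    rw [hM]; unfold Kdet; congr 1
    ext i j
    simp only [Matrix.submatrix_apply, Matrix.of_apply]
    congr 1
    push_cast [Fin.coe_castSucc, Fin.val_succ]
    module
  have e1 : Kdet ψ a0 a1 a2 δ (m+1) (x + δ • a1)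
      = (M.submatrix Fin.castSucc Fin.castSucc).det := by
    rw [hM]; unfold Kdet; congr 1
    ext i j
    simp only [Matrix.submatrix_apply, Matrix.of_apply]
    congr 1
    push_cast [Fin.coe_castSucc, Fin.val_succ]
    module
  have e2 : Kdet ψ a0 a1 a2 δ (m+1) (x - δ • a1)
      = (M.submatrix Fin.succ Fin.succ).det := by
    rw [hM]; unfold Kdet; congr 1
    ext i j
    simp only [Matrix.submatrix_apply, Matrix.of_apply]
    congr 1
    push_cast [Fin.coe_castSucc, Fin.val_succ]
    module
  have e3 : Kdet ψ a0 a1 a2 δ (m+1) (x + δ • a2)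
      = (M.submatrix Fin.castSucc Fin.succ).det := by
    rw [hM]; unfold Kdet; congr 1
    ext i j
    simp only [Matrix.submatrix_apply, Matrix.of_apply]
    congr 1
    push_cast [Fin.coe_castSucc, Fin.val_succ]
    module
  have e4 : Kdet ψ a0 a1 a2 δ (m+1) (x - δ • a2)
      = (M.submatrix Fin.succ Fin.castSucc).det := by
    rw [hM]; unfold Kdet; congr 1
    ext i j
    simp only [Matrix.submatrix_apply, Matrix.of_apply]
    congr 1
    push_cast [Fin.coe_castSucc, Fin.val_succ]
    module
  simp only [Nat.add_sub_cancel]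
  rw [e0, ebig, e1, e2, e3, e4]
  exact desnanot_jacobi M
end
end

section
/- Let 3 ≤ l ≤ 8, let {±a_1,...,±a_l} be a C_l-frame relative to P, let δ ∈ ℂ, and fix x ∈ V. Assume that [⟨a_i+a_j,x⟩]·[⟨a_i−a_j,x⟩] ≠ 0 for all distinct i,j ∈ {1,...,l}, and that τ : V → ℂ satisfies, for every triple of pairwise distinct i,j,k ∈ {1,...,l}, the Hirota equation [⟨a_j+a_k,x⟩][⟨a_j−a_k,x⟩]τ(x+a_iδ)τ(x−a_iδ) + [⟨a_k+a_i,x⟩][⟨a_k−a_i,x⟩]τ(x+a_jδ)τ(x−a_jδ) + [⟨a_i+a_j,x⟩][⟨a_i−a_j,x⟩]τ(x+a_kδ)τ(x−a_kδ) = 0. For distinct i,j and any u ∈ V define f_{ij}(x;u) = ( [⟨u,x⟩+⟨a_j,x⟩][⟨u,x⟩−⟨a_j,x⟩]·τ(x+a_iδ)τ(x−a_iδ) − [⟨u,x⟩+⟨a_i,x⟩][⟨u,x⟩−⟨a_i,x⟩]·τ(x+a_jδ)τ(x−a_jδ) ) / ( [⟨a_i+a_j,x⟩][⟨a_i−a_j,x⟩]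 ). Then: (1) f_{ij}(x;u) does not depend on the choice of the pair of distinct indices i,j; (2) writing f(x;u) for the common value, one has f(x;u_0)·[⟨u_1+u_2,x⟩][⟨u_1−u_2,x⟩] + f(x;u_1)·[⟨u_2+u_0,x⟩][⟨u_2−u_0,x⟩] + f(x;u_2)·[⟨u_0+u_1,x⟩][⟨u_0−u_1,x⟩] = 0 for all u_0,u_1,u_2 ∈ V; (3) f(x;a_k) = τ(x+a_kδ)τ(x−a_kδ) for every k ∈ {1,...,l}. -/
noncomputable section

/-- The function `f_{ij}(x;u)` of Lemma A.1 (with `ai, aj` the two frame vectors). -/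
def fAux (br : ℂ → ℂ) (τ : V8 → ℂ) (δ : ℂ) (x ai aj u : V8) : ℂ :=
  (br (ip u x + ip aj x) * br (ip u x - ip aj x) * (τ (x + δ • ai) * τ (x - δ • ai)) -
      br (ip u x + ip ai x) * br (ip u x - ip ai x) * (τ (x + δ • aj) * τ (x - δ • aj))) /
    (br (ip (ai + aj) x) * br (ip (ai - aj) x))

lemma myIpAdd (u v w : V8) : ip (u + v) w = ip u w + ip v w := by
  simp [ip, add_mul, Finset.sum_add_distrib]

lemma myIpSub (u v w : V8) : ip (u - v) w = ip u w - ip v w := by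
  simp [ip, sub_mul, Finset.sum_sub_distrib]

def myBb (br : ℂ → ℂ) (s t : ℂ) : ℂ := br (s + t) * br (s - t)

lemma myBb_fold (br : ℂ → ℂ) (s t : ℂ) : br (s + t) * br (s - t) = myBb br s t := rfl

lemma my_ex_ne (br : ℂ → ℂ) (hbr_ne : br ≠ 0) : ∃ w, br w ≠ 0 := by
  by_contra h
  push_neg at h
  exact hbr_ne (funext h)

lemma my_br_zero (br : ℂ → ℂ) (hbr_ne : br ≠ 0) (hbr3 : ThreeTermRel br) : br 0 = 0 := by
  obtain ⟨w, hw⟩ := my_ex_ne br hbr_ne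
  have H := hbr3 w 0 0 0
  simp only [add_zero, sub_zero, zero_add, zero_sub, neg_zero] at H
  have h2 : br 0 * br 0 * ((br w * br w) * 3) = 0 := by linear_combination H
  rcases mul_eq_zero.mp h2 with h | h
  · rcases mul_eq_zero.mp h with h | h <;> exact h
  · exact absurd h (by simp [hw])

lemma my_prod_ne (f g : ℂ → ℂ) (hf : Differentiable ℂ f) (hg : Differentiable ℂ g)
    (hf0 : ∃ z, f z ≠ 0) (hg0 : ∃ z, g z ≠ 0) : ∃ z, f z ≠ 0 ∧ g z ≠ 0 := by
  by_contra h
  push_neg at h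
  obtain ⟨z0, hz0⟩ := hf0
  obtain ⟨z1, hz1⟩ := hg0
  have hev : g =ᶠ[nhds z0] 0 := by
    have h1 : ∀ᶠ z in nhds z0, f z ≠ 0 := hf.continuous.continuousAt.eventually_ne hz0
    exact h1.mono fun z hz => h z hz
  have hg_an : AnalyticOnNhd ℂ g Set.univ := fun z _ => hg.analyticAt z
  have := hg_an.eqOn_zero_of_preconnected_of_eventuallyEq_zero isPreconnected_univ
    (Set.mem_univ z0) hev
  exact hz1 (this (Set.mem_univ z1))

lemma my_br_odd (br : ℂ → ℂ) (hbr_ne : br ≠ 0) (hbr_ent : Differentiable ℂ br)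
    (hbr3 : ThreeTermRel br) : ∀ t, br (-t) = -br t := by
  intro t
  obtain ⟨s, hs⟩ := my_ex_ne br hbr_ne
  set α := (s - t) / 2 with hα
  set β := (s + t) / 2 with hβ
  obtain ⟨z, hz1, hz2⟩ := my_prod_ne (fun z => br (z + β)) (fun z => br (z - β))
    (hbr_ent.comp (differentiable_id.add_const β))
    (hbr_ent.comp (differentiable_id.sub_const β))
    ⟨s - β, by simpa using hs⟩ ⟨s + β, by simpa using hs⟩
  have H := hbr3 z α β β
  rw [sub_self, my_br_zero br hbr_ne hbr3, mul_zero, zero_mul, zero_add,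
    show β + α = s by rw [hα, hβ]; ring, show β - α = t by rw [hα, hβ]; ring,
    show α + β = s by rw [hα, hβ]; ring, show α - β = -t by rw [hα, hβ]; ring] at H
  have h2 : (br t + br (-t)) * (br s * (br (z + β) * br (z - β))) = 0 := by
    linear_combination H
  rcases mul_eq_zero.mp h2 with h | h
  · linear_combination h
  · exact absurd h (mul_ne_zero hs (mul_ne_zero hz1 hz2))

/-- Lemma A.1: given a `C_l`-frame `{±a₁,…,±a_l}` (`3 ≤ l ≤ 8`) and `τ` satisfying all
the associated Hirota equations at `x`, the function `f_{ij}(x;u)` is independent of the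
pair `i ≠ j`; the common value `f(x;·)` satisfies the three-term relation in `u`, and
`f(x;a_k) = τ(x+a_kδ)τ(x−a_kδ)` for every `k`. -/
theorem statement18 (br : ℂ → ℂ) (hbr_ne : br ≠ 0) (hbr_ent : Differentiable ℂ br)
    (hbr3 : ThreeTermRel br)
    (l : ℕ) (hl3 : 3 ≤ l) (hl8 : l ≤ 8) (a : Fin l → V8)
    (hortho : ∀ i j, ip (a i) (a j) = if i = j then 1 else 0)
    (hlat : ∀ i j, i < j → a i + a j ∈ E8lat ∧ a i - a j ∈ E8lat)
    (hlat2 : ∀ i, (2 : ℂ) • a i ∈ E8lat)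
    (δ : ℂ) (x : V8)
    (hnz : ∀ i j : Fin l, i ≠ j →
      br (ip (a i + a j) x) * br (ip (a i - a j) x) ≠ 0)
    (τ : V8 → ℂ)
    (hHirota : ∀ i j k : Fin l, i ≠ j → j ≠ k → i ≠ k →
      br (ip (a j + a k) x) * br (ip (a j - a k) x) * (τ (x + δ • a i) * τ (x - δ • a i)) +
        br (ip (a k + a i) x) * br (ip (a k - a i) x) * (τ (x + δ • a j) * τ (x - δ • a j)) +
        br (ip (a i + a j) x) * br (ip (a i - a j) x) * (τ (x + δ • a k) * τ (x - δ • a k))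
        = 0) :
    (∀ i j r s : Fin l, i ≠ j → r ≠ s → ∀ u : V8,
      fAux br τ δ x (a i) (a j) u = fAux br τ δ x (a r) (a s) u) ∧
    (∀ i j : Fin l, i ≠ j → ∀ u0 u1 u2 : V8,
      fAux br τ δ x (a i) (a j) u0 * (br (ip (u1 + u2) x) * br (ip (u1 - u2) x)) +
        fAux br τ δ x (a i) (a j) u1 * (br (ip (u2 + u0) x) * br (ip (u2 - u0) x)) +
        fAux br τ δ x (a i) (a j) u2 * (br (ip (u0 + u1) x) * br (ip (u0 - u1) x)) = 0) ∧
    (∀ i j : Fin l, i ≠ j → ∀ k : Fin l,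
      fAux br τ δ x (a i) (a j) (a k) = τ (x + δ • a k) * τ (x - δ • a k)) := by
  have hbr0 : br 0 = 0 := my_br_zero br hbr_ne hbr3
  have hodd := my_br_odd br hbr_ne hbr_ent hbr3
  have hskew : ∀ s t : ℂ, myBb br s t = - myBb br t s := by
    intro s t
    unfold myBb
    rw [show t + s = s + t from add_comm t s, show t - s = -(s - t) by ring, hodd (s - t)]
    ring
  have hAA : ∀ s : ℂ, myBb br s s = 0 := by
    intro s; unfold myBb; rw [sub_self, hbr0, mul_zero]
  have TT : ∀ z α β γ : ℂ, myBb br β γ * myBb br z α + myBb br γ α * myBb br z β +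
      myBb br α β * myBb br z γ = 0 := by
    intro z α β γ; unfold myBb; linear_combination hbr3 z α β γ
  have key2 : ∀ v u0 u1 u2 : ℂ, myBb br u0 v * myBb br u1 u2 + myBb br u1 v * myBb br u2 u0 +
      myBb br u2 v * myBb br u0 u1 = 0 := by
    intro v u0 u1 u2
    linear_combination TT u0 v u1 u2 - myBb br u0 u2 * hskew v u1 + myBb br u1 v * hskew u0 u2
  have hnz' : ∀ i j : Fin l, i ≠ j → myBb br (ip (a i) x) (ip (a j) x) ≠ 0 := by
    intro i j h
    have h2 := hnz i j h
    rwa [myIpAdd, myIpSub, myBb_fold] at h2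
  have hH : ∀ i j k : Fin l, i ≠ j → j ≠ k → i ≠ k →
      myBb br (ip (a j) x) (ip (a k) x) * (τ (x + δ • a i) * τ (x - δ • a i)) +
      myBb br (ip (a k) x) (ip (a i) x) * (τ (x + δ • a j) * τ (x - δ • a j)) +
      myBb br (ip (a i) x) (ip (a j) x) * (τ (x + δ • a k) * τ (x - δ • a k)) = 0 := by
    intro i j k h1 h2 h3
    have h4 := hHirota i j k h1 h2 h3
    rwa [myIpAdd, myIpSub, myIpAdd, myIpSub, myIpAdd, myIpSub, myBb_fold, myBb_fold,
      myBb_fold] at h4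
  have Feq : ∀ ai aj u : V8, fAux br τ δ x ai aj u =
      (myBb br (ip u x) (ip aj x) * (τ (x + δ • ai) * τ (x - δ • ai)) -
       myBb br (ip u x) (ip ai x) * (τ (x + δ • aj) * τ (x - δ • aj))) /
      myBb br (ip ai x) (ip aj x) := by
    intro ai aj u
    rw [fAux, myIpAdd, myIpSub]
    rfl
  have step : ∀ i j k : Fin l, i ≠ j → j ≠ k → i ≠ k → ∀ u : V8,
      fAux br τ δ x (a i) (a j) u = fAux br τ δ x (a j) (a k) u := by
    intro i j k hij hjk hik u
    rw [Feq, Feq, div_eq_div_iff (hnz' i j hij) (hnz' j k hjk)]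
    linear_combination myBb br (ip u x) (ip (a j) x) * hH i j k hij hjk hik -
      (τ (x + δ • a j) * τ (x - δ • a j)) *
        TT (ip u x) (ip (a i) x) (ip (a j) x) (ip (a k) x)
  have swp : ∀ i j : Fin l, i ≠ j → ∀ u : V8,
      fAux br τ δ x (a i) (a j) u = fAux br τ δ x (a j) (a i) u := by
    intro i j hij u
    rw [Feq, Feq, div_eq_div_iff (hnz' i j hij) (hnz' j i hij.symm)]
    linear_combination (myBb br (ip u x) (ip (a j) x) * (τ (x + δ • a i) * τ (x - δ • a i)) -
      myBb br (ip u x) (ip (a i) x) * (τ (x + δ • a j) * τ (x - δ • a j))) *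
      hskew (ip (a j) x) (ip (a i) x)
  refine ⟨?_, ?_, ?_⟩
  · -- part 1
    have fix2 : ∀ p q t : Fin l, p ≠ q → p ≠ t → q ≠ t → ∀ u : V8,
        fAux br τ δ x (a p) (a q) u = fAux br τ δ x (a p) (a t) u := by
      intro p q t h1 h2 h3 u
      exact (swp p q h1 u).trans (step q p t h1.symm h2 h3 u)
    have fix1 : ∀ p q t : Fin l, p ≠ q → q ≠ t → p ≠ t → ∀ u : V8,
        fAux br τ δ x (a p) (a q) u = fAux br τ δ x (a t) (a q) u := by
      intro p q t h1 h2 h3 u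
      exact (step p q t h1 h2 h3 u).trans (swp q t h2 u)
    intro i j r s hij hrs u
    by_cases hri : r = i
    · subst hri
      by_cases hsj : s = j
      · subst hsj; rfl
      · exact fix2 r j s hij hrs (fun h => hsj h.symm) u
    · by_cases hrj : r = j
      · subst hrj
        by_cases hsi : s = i
        · subst hsi; exact swp s r hij u
        · exact (swp i r hij u).trans
            (fix2 r i s (fun h => hri h) hrs (fun h => hsi h.symm) u)
      · have h1 := fix1 i j r hij (fun h => hrj h.symm) (fun h => hri h.symm) u
        by_cases hsj : s = j
        · subst hsj; exact h1
        · exact h1.trans (fix2 r j s (fun h => hrj h) hrs (fun h => hsj h.symm) u)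
  · -- part 2
    intro i j hij u0 u1 u2
    simp only [Feq, myIpAdd, myIpSub, myBb_fold]
    rw [div_mul_eq_mul_div, div_mul_eq_mul_div, div_mul_eq_mul_div, ← add_div,
      ← add_div, div_eq_iff (hnz' i j hij)]
    linear_combination (τ (x + δ • a i) * τ (x - δ • a i)) *
        key2 (ip (a j) x) (ip u0 x) (ip u1 x) (ip u2 x) -
      (τ (x + δ • a j) * τ (x - δ • a j)) *
        key2 (ip (a i) x) (ip u0 x) (ip u1 x) (ip u2 x)
  · -- part 3
    intro i j hij k
    rw [Feq]
    by_cases hki : k = i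
    · subst hki
      rw [hAA, div_eq_iff (hnz' k j hij)]
      ring
    · by_cases hkj : k = j
      · subst hkj
        rw [hAA, div_eq_iff (hnz' i k hij)]
        linear_combination (-(τ (x + δ • a k) * τ (x - δ • a k))) *
          hskew (ip (a k) x) (ip (a i) x)
      · have hjk : j ≠ k := fun h => hkj h.symm
        have hik : i ≠ k := fun h => hki h.symm
        rw [div_eq_iff (hnz' i j hij)]
        linear_combination - hH i j k hij hjk hik +
          (τ (x + δ • a i) * τ (x - δ • a i)) * hskew (ip (a k) x) (ip (a j) x)
end
end
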